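/- Let $(\mathcal{X},\mu)$ be a probability space with a measure-preserving $\mathbb{Z}$-action given by iterates of an invertible measure-preserving map, and let $\{B_m\}$ be a sequence of measurable sets. Suppose there exist $\eta>1$ and $C>0$ such that for all $i\neq j$, $\big|\mu(B_i h_{-i}\cap B_j h_{-j})-\mu(B_i)\mu(B_j)\big|\le C\frac{\sqrt{\mu(B_i)\mu(B_j)}}{|i-j|^{\eta}}$. Then there exists $C'>0$ such that for all $n>m\geq 1$, setting $f_i(x)=\chi_{B_i}(xh_i)$, one has $\int_{\mathcal{X}}\big(\sum_{i=m}^n f_i-\sum_{i=m}^n\mu(B_i)\big)^2 d\mu\le C'\sum_{i=m}^n\mu(B_i)$. -/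

import Mathlib

open MeasureTheory Filter
open scoped ENNReal

lemma abs_sub_cast_dist (i j : ℕ) : |(i:ℝ) - (j:ℝ)| = (Nat.dist i j : ℝ) := by
  rcases le_total i j with hle | hle
  · rw [Nat.dist_eq_sub_of_le hle, abs_sub_comm,
      abs_of_nonneg (by exact sub_nonneg.mpr (Nat.cast_le.mpr hle)), Nat.cast_sub hle]
  · rw [Nat.dist_eq_sub_of_le_right hle,
      abs_of_nonneg (by exact sub_nonneg.mpr (Nat.cast_le.mpr hle)), Nat.cast_sub hle]

lemma sqrt_mul_le_add_div_two {a b : ℝ} (ha : 0 ≤ a) (hb : 0 ≤ b) :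
    Real.sqrt (a * b) ≤ (a + b) / 2 := by
  have h1 : a * b ≤ ((a + b) / 2) ^ 2 := by nlinarith [sq_nonneg (a - b)]
  calc Real.sqrt (a * b) ≤ Real.sqrt (((a + b) / 2) ^ 2) := Real.sqrt_le_sqrt h1
    _ = (a + b) / 2 := Real.sqrt_sq (by positivity)

lemma sum_dist_le (η : ℝ) (hη : 1 < η) (i : ℕ) (s : Finset ℕ) :
    ∑ j ∈ s.filter (· ≠ i), ((Nat.dist i j : ℝ) ^ η)⁻¹
      ≤ 2 * ∑' k : ℕ, ((k : ℝ) ^ η)⁻¹ := by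
  classical
  set g : ℕ → ℝ := fun k => ((k : ℝ) ^ η)⁻¹ with hg
  have hg0 : ∀ k, 0 ≤ g k := fun k => by positivity
  have hsum : Summable g := Real.summable_nat_rpow_inv.mpr hη
  have hsplit : s.filter (· ≠ i) = s.filter (· < i) ∪ s.filter (i < ·) := by
    ext j; by_cases hj : j ∈ s <;> simp [hj] <;> omega
  have hdisj : Disjoint (s.filter (· < i)) (s.filter (i < ·)) := by
    rw [Finset.disjoint_left]; intro a ha hb
    simp only [Finset.mem_filter] at ha hb; omega
  have key : ∀ t : Finset ℕ, (∀ x ∈ t, ∀ y ∈ t, Nat.dist i x = Nat.dist i y → x = y) →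
      ∑ j ∈ t, g (Nat.dist i j) ≤ ∑' k, g k := by
    intro t hinj
    rw [← Finset.sum_image (f := g) (g := fun j => Nat.dist i j) hinj]
    exact Summable.sum_le_tsum _ (fun k _ => hg0 k) hsum
  rw [hsplit, Finset.sum_union hdisj, two_mul]
  gcongr ?_ + ?_
  · refine key _ fun x hx y hy hxy => ?_
    simp only [Finset.mem_filter] at hx hy
    rw [Nat.dist_eq_sub_of_le_right hx.2.le, Nat.dist_eq_sub_of_le_right hy.2.le] at hxy
    omega
  · refine key _ fun x hx y hy hxy => ?_
    simp only [Finset.mem_filter] at hx hy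
    rw [Nat.dist_eq_sub_of_le hx.2.le, Nat.dist_eq_sub_of_le hy.2.le] at hxy
    omega

theorem stmt11 {X : Type*} [MeasurableSpace X] (μ : Measure X) [IsProbabilityMeasure μ]
    (h : ℤ → X → X) (hmeas : ∀ k : ℤ, MeasurePreserving (h k) μ μ)
    (h0 : ∀ x, h 0 x = x)
    (hact : ∀ k l : ℤ, ∀ x : X, h (k + l) x = h k (h l x))
    (B : ℕ → Set X) (hBmeas : ∀ i, MeasurableSet (B i))
    (η C : ℝ) (hη : 1 < η) (hC : 0 < C)
    (hcorr : ∀ i j : ℕ, i ≠ j →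
      |(μ ((h (i : ℤ)) ⁻¹' (B i) ∩ (h (j : ℤ)) ⁻¹' (B j))).toReal
          - (μ (B i)).toReal * (μ (B j)).toReal|
        ≤ C * Real.sqrt ((μ (B i)).toReal * (μ (B j)).toReal) / |(i : ℝ) - (j : ℝ)| ^ η) :
    ∃ C' : ℝ, 0 < C' ∧ ∀ m n : ℕ, 1 ≤ m → m < n →
      ∫ x, (∑ i ∈ Finset.Icc m n, Set.indicator (B i) (fun _ => (1 : ℝ)) (h (i : ℤ) x)
          - ∑ i ∈ Finset.Icc m n, (μ (B i)).toReal) ^ 2 ∂μ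
        ≤ C' * ∑ i ∈ Finset.Icc m n, (μ (B i)).toReal := by
  classical
  set T := ∑' k : ℕ, ((k : ℝ) ^ η)⁻¹ with hTdef
  have hT0 : 0 ≤ T := tsum_nonneg (fun k => by positivity)
  refine ⟨1 + 2 * C * T, by positivity, ?_⟩
  intro m n _hm _hmn
  set S := Finset.Icc m n with hS
  set A : ℕ → Set X := fun i => (h (i : ℤ)) ⁻¹' (B i) with hA
  have hAmeas : ∀ i, MeasurableSet (A i) := fun i => (hmeas (i : ℤ)).measurable (hBmeas i)
  have hAμ : ∀ i, μ (A i) = μ (B i) := fun i =>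
    (hmeas (i : ℤ)).measure_preimage (hBmeas i).nullMeasurableSet
  set μr : ℕ → ℝ := fun i => (μ (B i)).toReal with hμr
  have hμr0 : ∀ i, 0 ≤ μr i := fun i => ENNReal.toReal_nonneg
  set c := ∑ i ∈ S, μr i with hc
  have hInt : ∀ s : Set X, MeasurableSet s → Integrable (s.indicator (fun _ => (1 : ℝ))) μ :=
    fun s hs => (integrable_indicator_iff hs).mpr
      ((integrableOn_const_iff (C := (1 : ℝ))).mpr (Or.inr (measure_lt_top μ s)))
  have hIind : ∀ s : Set X, MeasurableSet s →
      ∫ x, s.indicator (fun _ => (1 : ℝ)) x ∂μ = (μ s).toReal := fun s hs => by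
    rw [integral_indicator_const (1 : ℝ) hs]; simp [Measure.real]
  have hpt : ∀ x, (∑ i ∈ S, Set.indicator (B i) (fun _ => (1 : ℝ)) (h (i : ℤ) x))
      = ∑ i ∈ S, (A i).indicator (fun _ => (1 : ℝ)) x := by
    intro x
    refine Finset.sum_congr rfl fun i _ => ?_
    simp [Set.indicator_apply, hA, Set.mem_preimage]
  have hsq : ∀ x, (∑ i ∈ S, (A i).indicator (fun _ => (1 : ℝ)) x) ^ 2
      = ∑ i ∈ S, ∑ j ∈ S, (A i ∩ A j).indicator (fun _ => (1 : ℝ)) x := by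
    intro x
    rw [sq, Finset.sum_mul_sum]
    refine Finset.sum_congr rfl fun i _ => Finset.sum_congr rfl fun j _ => ?_
    rw [← Set.inter_indicator_mul]; simp
  have hI1 : Integrable (fun x => ∑ i ∈ S, (A i).indicator (fun _ => (1 : ℝ)) x) μ :=
    integrable_finset_sum _ (fun i _ => hInt _ (hAmeas i))
  have hI2 : Integrable (fun x => (∑ i ∈ S, (A i).indicator (fun _ => (1 : ℝ)) x) ^ 2) μ := by
    rw [show (fun x => (∑ i ∈ S, (A i).indicator (fun _ => (1 : ℝ)) x) ^ 2)
        = fun x => ∑ i ∈ S, ∑ j ∈ S, (A i ∩ A j).indicator (fun _ => (1 : ℝ)) x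
      from funext hsq]
    exact integrable_finset_sum _ (fun i _ => integrable_finset_sum _
      (fun j _ => hInt _ ((hAmeas i).inter (hAmeas j))))
  have hIa : ∫ x, (∑ i ∈ S, (A i).indicator (fun _ => (1 : ℝ)) x) ∂μ = c := by
    rw [integral_finset_sum _ (fun i _ => hInt _ (hAmeas i))]
    exact Finset.sum_congr rfl fun i _ => by rw [hIind _ (hAmeas i), hAμ i]
  have hIa2 : ∫ x, (∑ i ∈ S, (A i).indicator (fun _ => (1 : ℝ)) x) ^ 2 ∂μ
      = ∑ i ∈ S, ∑ j ∈ S, (μ (A i ∩ A j)).toReal := by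
    simp only [hsq]
    rw [integral_finset_sum _ (fun i _ => integrable_finset_sum _
      (fun j _ => hInt _ ((hAmeas i).inter (hAmeas j))))]
    refine Finset.sum_congr rfl fun i _ => ?_
    rw [integral_finset_sum _ (fun j _ => hInt _ ((hAmeas i).inter (hAmeas j)))]
    exact Finset.sum_congr rfl fun j _ => hIind _ ((hAmeas i).inter (hAmeas j))
  have hIsub : Integrable (fun x => (∑ i ∈ S, (A i).indicator (fun _ => (1 : ℝ)) x) ^ 2
      - (2 * c) * (∑ i ∈ S, (A i).indicator (fun _ => (1 : ℝ)) x)) μ :=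
    hI2.sub (hI1.const_mul (2 * c))
  have key : ∫ x, (∑ i ∈ S, Set.indicator (B i) (fun _ => (1 : ℝ)) (h (i : ℤ) x)
        - ∑ i ∈ S, μr i) ^ 2 ∂μ
      = ∑ i ∈ S, ∑ j ∈ S, ((μ (A i ∩ A j)).toReal - μr i * μr j) := by
    have e1 : ∀ x, (∑ i ∈ S, Set.indicator (B i) (fun _ => (1 : ℝ)) (h (i : ℤ) x)
          - ∑ i ∈ S, μr i) ^ 2
        = (∑ i ∈ S, (A i).indicator (fun _ => (1 : ℝ)) x) ^ 2
            - (2 * c) * (∑ i ∈ S, (A i).indicator (fun _ => (1 : ℝ)) x) + c ^ 2 := by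
      intro x; rw [hpt x]; rw [hc]; ring
    rw [show (fun x => (∑ i ∈ S, Set.indicator (B i) (fun _ => (1 : ℝ)) (h (i : ℤ) x)
          - ∑ i ∈ S, μr i) ^ 2)
        = fun x => (∑ i ∈ S, (A i).indicator (fun _ => (1 : ℝ)) x) ^ 2
            - (2 * c) * (∑ i ∈ S, (A i).indicator (fun _ => (1 : ℝ)) x) + c ^ 2
      from funext e1]
    rw [integral_add hIsub (integrable_const _),
      integral_sub hI2 (hI1.const_mul (2 * c)), integral_const_mul, hIa, hIa2,
      integral_const]
    have hμuniv : μ.real Set.univ = 1 := by simp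
    rw [smul_eq_mul, hμuniv, one_mul]
    simp only [Finset.sum_sub_distrib]
    have hc2 : c ^ 2 = ∑ i ∈ S, ∑ j ∈ S, μr i * μr j := by
      rw [sq, hc, Finset.sum_mul_sum]
    rw [← hc2]; ring
  rw [key]
  set P : ℕ → ℕ → ℝ := fun i j => if j = i then 0 else C / 2 * ((Nat.dist i j : ℝ) ^ η)⁻¹
    with hP
  have hPsymm : ∀ i j, P j i = P i j := by
    intro i j; simp only [hP]
    rcases eq_or_ne i j with rfl | hne
    · simp
    · rw [if_neg hne.symm, if_neg hne, Nat.dist_comm]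
  have hPsum : ∀ i, ∑ j ∈ S, P i j ≤ C * T := by
    intro i
    have heq : ∑ j ∈ S, P i j
        = ∑ j ∈ S.filter (· ≠ i), C / 2 * ((Nat.dist i j : ℝ) ^ η)⁻¹ := by
      rw [Finset.sum_filter]
      refine Finset.sum_congr rfl fun j _ => ?_
      simp only [hP]
      by_cases hj : j = i
      · simp [hj]
      · simp [hj]
    rw [heq, ← Finset.mul_sum]
    calc C / 2 * ∑ j ∈ S.filter (· ≠ i), ((Nat.dist i j : ℝ) ^ η)⁻¹
        ≤ C / 2 * (2 * T) :=
          mul_le_mul_of_nonneg_left (sum_dist_le η hη i S) (by positivity)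
      _ = C * T := by ring
  have hterm : ∀ i ∈ S, ∀ j ∈ S, (μ (A i ∩ A j)).toReal - μr i * μr j
      ≤ (if i = j then μr i else 0) + μr i * P i j + μr j * P i j := by
    intro i _ j _
    rcases eq_or_ne i j with rfl | hij
    · have hPii : P i i = 0 := by simp [hP]
      rw [if_pos rfl, hPii, mul_zero, add_zero, add_zero, Set.inter_self, hAμ i]
      show μr i - μr i * μr i ≤ μr i
      nlinarith [hμr0 i, sq_nonneg (μr i)]
    · rw [if_neg hij]
      have hPval : P i j = C / 2 * ((Nat.dist i j : ℝ) ^ η)⁻¹ := by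
        simp only [hP]; exact if_neg (fun hji => hij hji.symm)
      have h1 : (μ (A i ∩ A j)).toReal - μr i * μr j
          ≤ C * Real.sqrt (μr i * μr j) / |(i : ℝ) - (j : ℝ)| ^ η :=
        le_trans (le_abs_self _) (hcorr i j hij)
      have hd1 : 1 ≤ Nat.dist i j := Nat.dist_pos_of_ne hij
      have hdpos : (0 : ℝ) < (Nat.dist i j : ℝ) ^ η :=
        Real.rpow_pos_of_pos (by exact_mod_cast Nat.lt_of_lt_of_le Nat.zero_lt_one hd1) η
      have h2 : C * Real.sqrt (μr i * μr j) / ((Nat.dist i j : ℝ) ^ η)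
          ≤ 0 + μr i * P i j + μr j * P i j := by
        have hsq' := sqrt_mul_le_add_div_two (hμr0 i) (hμr0 j)
        have hinv : (0:ℝ) ≤ ((Nat.dist i j : ℝ) ^ η)⁻¹ := by positivity
        rw [hPval, div_eq_mul_inv]
        have h3 : C * Real.sqrt (μr i * μr j) * ((Nat.dist i j : ℝ) ^ η)⁻¹
            ≤ C * ((μr i + μr j) / 2) * ((Nat.dist i j : ℝ) ^ η)⁻¹ :=
          mul_le_mul_of_nonneg_right (mul_le_mul_of_nonneg_left hsq' hC.le) hinv
        calc C * Real.sqrt (μr i * μr j) * ((Nat.dist i j : ℝ) ^ η)⁻¹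
            ≤ C * ((μr i + μr j) / 2) * ((Nat.dist i j : ℝ) ^ η)⁻¹ := h3
          _ = 0 + μr i * (C / 2 * ((Nat.dist i j : ℝ) ^ η)⁻¹)
              + μr j * (C / 2 * ((Nat.dist i j : ℝ) ^ η)⁻¹) := by ring
      calc (μ (A i ∩ A j)).toReal - μr i * μr j
          ≤ C * Real.sqrt (μr i * μr j) / |(i : ℝ) - (j : ℝ)| ^ η := h1
        _ = C * Real.sqrt (μr i * μr j) / ((Nat.dist i j : ℝ) ^ η) := by
            rw [abs_sub_cast_dist]
        _ ≤ 0 + μr i * P i j + μr j * P i j := h2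
  have hdiag : (∑ i ∈ S, ∑ j ∈ S, if i = j then μr i else 0) = c := by
    rw [hc]
    refine Finset.sum_congr rfl fun i hi => ?_
    rw [Finset.sum_ite_eq S i (fun _ => μr i), if_pos hi]
  have hswap : (∑ i ∈ S, ∑ j ∈ S, μr j * P i j) = ∑ i ∈ S, ∑ j ∈ S, μr i * P i j := by
    rw [Finset.sum_comm]
    exact Finset.sum_congr rfl fun i _ => Finset.sum_congr rfl fun j _ => by rw [hPsymm]
  have hsum2 : ∑ i ∈ S, (μr i * ∑ j ∈ S, P i j) ≤ ∑ i ∈ S, μr i * (C * T) :=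
    Finset.sum_le_sum fun i _ => mul_le_mul_of_nonneg_left (hPsum i) (hμr0 i)
  calc ∑ i ∈ S, ∑ j ∈ S, ((μ (A i ∩ A j)).toReal - μr i * μr j)
      ≤ ∑ i ∈ S, ∑ j ∈ S, ((if i = j then μr i else 0) + μr i * P i j + μr j * P i j) :=
        Finset.sum_le_sum fun i hi => Finset.sum_le_sum fun j hj => hterm i hi j hj
    _ = (∑ i ∈ S, ∑ j ∈ S, if i = j then μr i else 0)
        + (∑ i ∈ S, ∑ j ∈ S, μr i * P i j) + (∑ i ∈ S, ∑ j ∈ S, μr j * P i j) := by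
        simp only [Finset.sum_add_distrib]
    _ = c + 2 * ∑ i ∈ S, (μr i * ∑ j ∈ S, P i j) := by
        rw [hdiag, hswap]
        simp only [← Finset.mul_sum]
        ring
    _ ≤ c + 2 * ∑ i ∈ S, μr i * (C * T) := by linarith
    _ = (1 + 2 * C * T) * c := by
        rw [← Finset.sum_mul, ← hc]; ring
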